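/- Let P be a univariate polynomial of degree d with integer coefficients, each of absolute value less than 2^τ, and suppose P takes only positive values on [0,1]. Then the minimum m of P over [0,1] satisfies m > 3^(d/2) / (2^((2d-1)τ) · (d+1)^(2d-1/2)). -/

import Mathlib

open Polynomial Set

section AuxiliaryDevelopment

open Matrix BigOperators Finset

private lemma dot_self_nonneg {n : ℕ} (v : Fin n → ℝ) : 0 ≤ v ⬝ᵥ v :=
  Finset.sum_nonneg fun i _ => mul_self_nonneg _

private lemma dot_self_eq_zero_iff {n : ℕ} (v : Fin n → ℝ) : v ⬝ᵥ v = 0 ↔ v = 0 := by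
  constructor
  · intro h
    funext i
    have := (Finset.sum_eq_zero_iff_of_nonneg (fun i _ => mul_self_nonneg (v i))).mp h i (Finset.mem_univ i)
    simpa [mul_self_eq_zero] using this
  · rintro rfl; simp

private lemma gram_det_le : ∀ (k n : ℕ) (v : Fin k → (Fin n → ℝ)),
    (Matrix.of fun i j => v i ⬝ᵥ v j).det ≤ ∏ i, v i ⬝ᵥ v i := by
  intro k
  induction k with
  | zero => intro n v; simp [Matrix.det_fin_zero]
  | succ k ih =>
    intro n v
    set G : Matrix (Fin (k+1)) (Fin (k+1)) ℝ := Matrix.of fun i j => v i ⬝ᵥ v j with hG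
    by_cases hg : v 0 ⬝ᵥ v 0 = 0
    · -- v 0 = 0, so row 0 of G is zero, det = 0
      have hv0 : v 0 = 0 := (dot_self_eq_zero_iff _).mp hg
      have : G.det = 0 := by
        apply Matrix.det_eq_zero_of_row_eq_zero 0
        intro j; simp [hG, hv0]
      rw [this]
      exact Finset.prod_nonneg fun i _ => dot_self_nonneg _
    · have hgpos : 0 < v 0 ⬝ᵥ v 0 := lt_of_le_of_ne (dot_self_nonneg _) (Ne.symm hg)
      set c : Fin (k+1) → ℝ := fun i => if i = 0 then 0 else (v 0 ⬝ᵥ v i) / (v 0 ⬝ᵥ v 0) with hc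
      set v' : Fin (k+1) → (Fin n → ℝ) := fun i => v i - c i • v 0 with hv'
      set E : Matrix (Fin (k+1)) (Fin (k+1)) ℝ :=
        Matrix.of fun i b => (if b = i then (1:ℝ) else 0) + (if b = 0 then -c i else 0) with hE
      have hEG : ∀ i a, (E * G) i a = G i a - c i * G 0 a := by
        intro i a
        rw [Matrix.mul_apply]
        simp only [hE, Matrix.of_apply, add_mul, Finset.sum_add_distrib]
        simp [ite_mul, Finset.sum_ite_eq', sub_eq_add_neg]
      have hGEt : ∀ i j, (E * G * Eᵀ) i j = (E * G) i j - c j * (E * G) i 0 := by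
        intro i j
        rw [Matrix.mul_apply]
        simp only [Matrix.transpose_apply, hE, Matrix.of_apply, mul_add, mul_ite, mul_one, mul_zero,
          Finset.sum_add_distrib]
        simp [mul_ite, Finset.sum_ite_eq', sub_eq_add_neg, mul_comm]
      have hc0 : c 0 = 0 := by simp [hc]
      have hv'0 : v' 0 = v 0 := by simp [hv', hc0]
      set G' : Matrix (Fin (k+1)) (Fin (k+1)) ℝ := Matrix.of fun i j => v' i ⬝ᵥ v' j with hG'
      have key : G' = E * G * Eᵀ := by
        ext i j
        rw [hGEt, hEG, hEG]
        have : v' i ⬝ᵥ v' j =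
            G i j - c i * G 0 j - c j * G i 0 + c i * (c j * G 0 0) := by
          simp only [hv', sub_dotProduct, dotProduct_sub, smul_dotProduct,
            dotProduct_smul, smul_eq_mul, hG, Matrix.of_apply]
          ring
        show v' i ⬝ᵥ v' j = _
        rw [this]; ring
      have hdetE : E.det = 1 := by
        have ht : E.BlockTriangular OrderDual.toDual := by
          intro i j hij
          have hij' : (i:Fin (k+1)) < j := hij
          have h1 : ¬ (j = i) := by exact fun h => absurd h (by rintro rfl; exact lt_irrefl _ hij')
          have h2 : ¬ (j = 0) := by
            intro h; rw [h] at hij'; exact absurd hij' (by simp [Fin.le_def, Fin.lt_def])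
          simp [hE, h1, h2]
        rw [Matrix.det_of_lowerTriangular E ht]
        have : ∀ i : Fin (k+1), E i i = 1 + (if i = 0 then -c i else 0) := by
          intro i; simp [hE]
        calc ∏ i, E i i = ∏ i : Fin (k+1), 1 := by
              apply Finset.prod_congr rfl
              intro i _
              rw [this i]
              by_cases h : i = 0 <;> simp [h, hc0]
          _ = 1 := by simp
      have hdet : G.det = G'.det := by
        rw [key, Matrix.det_mul, Matrix.det_mul, hdetE, Matrix.det_transpose, hdetE]
        ring
      -- structure of G'
      have hG'0j : ∀ j, j ≠ 0 → G' 0 j = 0 := by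
        intro j hj
        show v' 0 ⬝ᵥ v' j = 0
        rw [hv'0]
        have : v' j = v j - c j • v 0 := rfl
        rw [this, dotProduct_sub, dotProduct_smul, hc]
        simp only [hj, if_false, smul_eq_mul]
        field_simp; simp
      have hG'00 : G' 0 0 = v 0 ⬝ᵥ v 0 := by simp [hG', hv'0]
      set w : Fin k → (Fin n → ℝ) := fun i => v' i.succ with hw
      have hsub : (G'.submatrix Fin.succ Fin.succ) = Matrix.of fun i j => w i ⬝ᵥ w j := by
        ext i j; simp [hG', hw]
      have hdet' : G'.det = G' 0 0 * (Matrix.of fun i j : Fin k => w i ⬝ᵥ w j).det := by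
        rw [Matrix.det_succ_row_zero]
        rw [Finset.sum_eq_single 0]
        · rw [← hsub]; simp
        · intro j _ hj; rw [hG'0j j hj]; ring
        · intro h; exact absurd (Finset.mem_univ _) h
      have hwle : ∀ i : Fin k, w i ⬝ᵥ w i ≤ v i.succ ⬝ᵥ v i.succ := by
        intro i
        have hcs : c i.succ = (v 0 ⬝ᵥ v i.succ) / (v 0 ⬝ᵥ v 0) := by
          simp [hc, Fin.succ_ne_zero]
        have hexp : w i ⬝ᵥ w i = v i.succ ⬝ᵥ v i.succ
            - 2 * c i.succ * (v 0 ⬝ᵥ v i.succ) + c i.succ ^ 2 * (v 0 ⬝ᵥ v 0) := by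
          simp only [hw, hv', sub_dotProduct, dotProduct_sub, smul_dotProduct,
            dotProduct_smul, smul_eq_mul]
          rw [dotProduct_comm (v 0) (v i.succ)]
          ring
        rw [hexp, hcs]
        have : (v 0 ⬝ᵥ v i.succ) / (v 0 ⬝ᵥ v 0) * 2⁻¹ * 0 = 0 := by ring
        have heq : v i.succ ⬝ᵥ v i.succ - 2 * ((v 0 ⬝ᵥ v i.succ) / (v 0 ⬝ᵥ v 0)) * (v 0 ⬝ᵥ v i.succ)
            + ((v 0 ⬝ᵥ v i.succ) / (v 0 ⬝ᵥ v 0)) ^ 2 * (v 0 ⬝ᵥ v 0)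
            = v i.succ ⬝ᵥ v i.succ - (v 0 ⬝ᵥ v i.succ)^2 / (v 0 ⬝ᵥ v 0) := by
          field_simp
          ring
        rw [heq]
        have : 0 ≤ (v 0 ⬝ᵥ v i.succ)^2 / (v 0 ⬝ᵥ v 0) := by positivity
        linarith
      have hIH := ih n w
      calc G.det = G' 0 0 * (Matrix.of fun i j : Fin k => w i ⬝ᵥ w j).det := by rw [hdet, hdet']
        _ ≤ G' 0 0 * ∏ i : Fin k, v i.succ ⬝ᵥ v i.succ := by
            apply mul_le_mul_of_nonneg_left _ (by rw [hG'00]; exact dot_self_nonneg _)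
            refine le_trans hIH (Finset.prod_le_prod (fun i _ => dot_self_nonneg _) (fun i _ => hwle i))
        _ = ∏ i : Fin (k+1), v i ⬝ᵥ v i := by rw [hG'00, Fin.prod_univ_succ]


private lemma abs_det_le_prod {n : ℕ} (M : Matrix (Fin n) (Fin n) ℝ) :
    |M.det| ≤ ∏ i, Real.sqrt (∑ j, (M i j)^2) := by
  have h1 : M * Mᵀ = Matrix.of fun i j => (fun i => M i) i ⬝ᵥ (fun i => M i) j := by
    ext i j
    simp [Matrix.mul_apply, dotProduct]
  have h2 : M.det ^ 2 = (M * Mᵀ).det := by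
    rw [Matrix.det_mul, Matrix.det_transpose]; ring
  have h3 : M.det ^ 2 ≤ ∏ i, (M i ⬝ᵥ M i) := by
    rw [h2, h1]; exact gram_det_le n n _
  have h4 : ∀ i : Fin n, M i ⬝ᵥ M i = Real.sqrt (∑ j, (M i j)^2) ^ 2 := by
    intro i
    rw [Real.sq_sqrt (Finset.sum_nonneg fun j _ => sq_nonneg _)]
    simp [dotProduct, pow_two]
  have h5 : M.det ^ 2 ≤ (∏ i, Real.sqrt (∑ j, (M i j)^2)) ^ 2 := by
    calc M.det ^2 ≤ ∏ i, (M i ⬝ᵥ M i) := h3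
      _ = ∏ i, Real.sqrt (∑ j, (M i j)^2) ^ 2 := Finset.prod_congr rfl fun i _ => h4 i
      _ = (∏ i, Real.sqrt (∑ j, (M i j)^2)) ^ 2 := by rw [Finset.prod_pow]
  have hnn : 0 ≤ ∏ i, Real.sqrt (∑ j, (M i j)^2) :=
    Finset.prod_nonneg fun i _ => Real.sqrt_nonneg _
  calc |M.det| = Real.sqrt (M.det ^ 2) := (Real.sqrt_sq_eq_abs _).symm
    _ ≤ Real.sqrt ((∏ i, Real.sqrt (∑ j, (M i j)^2)) ^ 2) := Real.sqrt_le_sqrt h5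
    _ = |∏ i, Real.sqrt (∑ j, (M i j)^2)| := Real.sqrt_sq_eq_abs _
    _ = _ := abs_of_nonneg hnn

private noncomputable def L1 (p : Polynomial ℝ) : ℝ := ∑ k ∈ p.support, |p.coeff k|

private lemma sum_abs_coeff_le (p : Polynomial ℝ) (s : Finset ℕ) :
    ∑ k ∈ s, |p.coeff k| ≤ L1 p := by
  have h1 : ∑ k ∈ s ∩ p.support, |p.coeff k| = ∑ k ∈ s, |p.coeff k| := by
    apply Finset.sum_subset (Finset.inter_subset_left)
    intro x _ hx
    have : x ∉ p.support := fun h => hx (Finset.mem_inter.mpr ⟨‹x ∈ s›, h⟩)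
    simp [Polynomial.notMem_support_iff.mp this]
  rw [← h1]
  exact Finset.sum_le_sum_of_subset_of_nonneg Finset.inter_subset_right
    (fun i _ _ => abs_nonneg _)

private lemma L1_nonneg (p : Polynomial ℝ) : 0 ≤ L1 p :=
  Finset.sum_nonneg fun i _ => abs_nonneg _

private lemma L1_C (a : ℝ) : L1 (Polynomial.C a) = |a| := by
  by_cases h : a = 0
  · simp [L1, h]
  · rw [L1, Polynomial.support_C h]
    simp

private lemma L1_add_le (p q : Polynomial ℝ) : L1 (p + q) ≤ L1 p + L1 q := by
  calc L1 (p + q) = ∑ k ∈ (p+q).support, |p.coeff k + q.coeff k| := by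
        simp [L1]
    _ ≤ ∑ k ∈ (p+q).support, (|p.coeff k| + |q.coeff k|) :=
        Finset.sum_le_sum fun i _ => abs_add_le _ _
    _ = (∑ k ∈ (p+q).support, |p.coeff k|) + ∑ k ∈ (p+q).support, |q.coeff k| :=
        Finset.sum_add_distrib
    _ ≤ L1 p + L1 q := add_le_add (sum_abs_coeff_le _ _) (sum_abs_coeff_le _ _)

private lemma L1_X_mul_le (p : Polynomial ℝ) : L1 (Polynomial.X * p) ≤ L1 p := by
  have hz : ∀ k ∈ (Polynomial.X * p).support, k ≠ 0 := by
    intro k hk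
    rintro rfl
    have : (Polynomial.X * p).coeff 0 = 0 := by
      rw [Polynomial.mul_coeff_zero]; simp
    exact (Polynomial.mem_support_iff.mp hk) this
  have hinj : Set.InjOn (fun k => k - 1) ((Polynomial.X * p).support : Set ℕ) := by
    intro a ha b hb hab
    have ha' := hz a ha; have hb' := hz b hb
    simp only at hab
    omega
  calc L1 (Polynomial.X * p) = ∑ k ∈ (Polynomial.X * p).support, |p.coeff (k - 1)| := by
        apply Finset.sum_congr rfl
        intro k hk
        have hk' := hz k hk
        obtain ⟨j, rfl⟩ := Nat.exists_eq_succ_of_ne_zero hk'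
        rw [Polynomial.coeff_X_mul]
        simp
    _ = ∑ j ∈ (Polynomial.X * p).support.image (fun k => k - 1), |p.coeff j| :=
        (Finset.sum_image (f := fun j => |p.coeff j|) (g := fun k => k - 1) (fun a ha b hb => hinj ha hb)).symm
    _ ≤ L1 p := sum_abs_coeff_le _ _

section PolyMatrix

variable {A : Type*} [CommRing A] [Nontrivial A] {n : ℕ}

private lemma det_natDegree_le (D : Finset (Fin n)) :
    ∀ (M : Matrix (Fin n) (Fin n) (Polynomial A)),
    (∀ i, i ∉ D → ∀ j, (M i j).natDegree = 0) →
    (∀ i j, (M i j).natDegree ≤ 1) →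
    M.det.natDegree ≤ D.card := by
  induction D using Finset.induction_on with
  | empty =>
    intro M hconst _
    have : M = (Matrix.of fun i j => (M i j).coeff 0).map Polynomial.C := by
      apply Matrix.ext; intro i j
      rw [Matrix.map_apply, Matrix.of_apply]
      exact Polynomial.eq_C_of_natDegree_eq_zero (hconst i (Finset.notMem_empty i) j)
    rw [this, ← RingHom.mapMatrix_apply, ← RingHom.map_det]
    simp
  | @insert r D' hr ih =>
    intro M hconst hdeg1
    set u : Fin n → Polynomial A := fun j => Polynomial.C ((M r j).coeff 0) with hu
    set w : Fin n → Polynomial A := fun j => Polynomial.C ((M r j).coeff 1) with hw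
    have hrow : M r = ((Polynomial.X : Polynomial A) • w) + u := by
      funext j
      have h1 : (((Polynomial.X : Polynomial A) • w) + u) j
          = Polynomial.X * Polynomial.C ((M r j).coeff 1) + Polynomial.C ((M r j).coeff 0) := rfl
      rw [h1]
      conv_lhs => rw [Polynomial.eq_X_add_C_of_natDegree_le_one (hdeg1 r j)]
      ring
    have hM : M = M.updateRow r (((Polynomial.X : Polynomial A) • w) + u) := by
      rw [← hrow, Matrix.updateRow_eq_self]
    have hsplit : M.det = Polynomial.X * (M.updateRow r w).det + (M.updateRow r u).det := by
      conv_lhs => rw [hM]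
      rw [Matrix.det_updateRow_add, Matrix.det_updateRow_smul]
    have hcu : ∀ i, i ∉ D' → ∀ j, ((M.updateRow r u) i j).natDegree = 0 := by
      intro i hi j
      by_cases h : i = r
      · subst h; rw [Matrix.updateRow_self]; simp [hu]
      · rw [Matrix.updateRow_ne h]
        exact hconst i (by simp [h, hi]) j
    have hcw : ∀ i, i ∉ D' → ∀ j, ((M.updateRow r w) i j).natDegree = 0 := by
      intro i hi j
      by_cases h : i = r
      · subst h; rw [Matrix.updateRow_self]; simp [hw]
      · rw [Matrix.updateRow_ne h]
        exact hconst i (by simp [h, hi]) j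
    have hd1u : ∀ i j, ((M.updateRow r u) i j).natDegree ≤ 1 := by
      intro i j
      by_cases h : i = r
      · subst h; rw [Matrix.updateRow_self]; simp [hu]
      · rw [Matrix.updateRow_ne h]; exact hdeg1 i j
    have hd1w : ∀ i j, ((M.updateRow r w) i j).natDegree ≤ 1 := by
      intro i j
      by_cases h : i = r
      · subst h; rw [Matrix.updateRow_self]; simp [hw]
      · rw [Matrix.updateRow_ne h]; exact hdeg1 i j
    rw [hsplit, Finset.card_insert_of_notMem hr]
    refine le_trans (Polynomial.natDegree_add_le _ _) (max_le ?_ ?_)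
    · refine le_trans (Polynomial.natDegree_mul_le) ?_
      have h2 := ih (M.updateRow r w) hcw hd1w
      have hX : (Polynomial.X : Polynomial A).natDegree = 1 := Polynomial.natDegree_X
      omega
    · exact le_trans (ih (M.updateRow r u) hcu hd1u) (by omega)

private lemma det_coeff_card (D : Finset (Fin n)) :
    ∀ (M : Matrix (Fin n) (Fin n) (Polynomial A)),
    (∀ i, i ∉ D → ∀ j, (M i j).natDegree = 0) →
    (∀ i j, (M i j).natDegree ≤ 1) →
    M.det.coeff D.card
      = (Matrix.of fun i j => if i ∈ D then (M i j).coeff 1 else (M i j).coeff 0).det := by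
  induction D using Finset.induction_on with
  | empty =>
    intro M hconst _
    have : M = (Matrix.of fun i j => (M i j).coeff 0).map Polynomial.C := by
      apply Matrix.ext; intro i j
      rw [Matrix.map_apply, Matrix.of_apply]
      exact Polynomial.eq_C_of_natDegree_eq_zero (hconst i (Finset.notMem_empty i) j)
    conv_lhs => rw [this]
    rw [← RingHom.mapMatrix_apply, ← RingHom.map_det]
    simp
  | @insert r D' hr ih =>
    intro M hconst hdeg1
    set u : Fin n → Polynomial A := fun j => Polynomial.C ((M r j).coeff 0) with hu
    set w : Fin n → Polynomial A := fun j => Polynomial.C ((M r j).coeff 1) with hw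
    have hrow : M r = ((Polynomial.X : Polynomial A) • w) + u := by
      funext j
      have h1 : (((Polynomial.X : Polynomial A) • w) + u) j
          = Polynomial.X * Polynomial.C ((M r j).coeff 1) + Polynomial.C ((M r j).coeff 0) := rfl
      rw [h1]
      conv_lhs => rw [Polynomial.eq_X_add_C_of_natDegree_le_one (hdeg1 r j)]
      ring
    have hM : M = M.updateRow r (((Polynomial.X : Polynomial A) • w) + u) := by
      rw [← hrow, Matrix.updateRow_eq_self]
    have hsplit : M.det = Polynomial.X * (M.updateRow r w).det + (M.updateRow r u).det := by
      conv_lhs => rw [hM]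
      rw [Matrix.det_updateRow_add, Matrix.det_updateRow_smul]
    have hcu : ∀ i, i ∉ D' → ∀ j, ((M.updateRow r u) i j).natDegree = 0 := by
      intro i hi j
      by_cases h : i = r
      · subst h; rw [Matrix.updateRow_self]; simp [hu]
      · rw [Matrix.updateRow_ne h]
        exact hconst i (by simp [h, hi]) j
    have hcw : ∀ i, i ∉ D' → ∀ j, ((M.updateRow r w) i j).natDegree = 0 := by
      intro i hi j
      by_cases h : i = r
      · subst h; rw [Matrix.updateRow_self]; simp [hw]
      · rw [Matrix.updateRow_ne h]
        exact hconst i (by simp [h, hi]) j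
    have hd1u : ∀ i j, ((M.updateRow r u) i j).natDegree ≤ 1 := by
      intro i j
      by_cases h : i = r
      · subst h; rw [Matrix.updateRow_self]; simp [hu]
      · rw [Matrix.updateRow_ne h]; exact hdeg1 i j
    have hd1w : ∀ i j, ((M.updateRow r w) i j).natDegree ≤ 1 := by
      intro i j
      by_cases h : i = r
      · subst h; rw [Matrix.updateRow_self]; simp [hw]
      · rw [Matrix.updateRow_ne h]; exact hdeg1 i j
    rw [hsplit, Finset.card_insert_of_notMem hr, Polynomial.coeff_add,
      Polynomial.coeff_X_mul]
    have hzero : (M.updateRow r u).det.coeff (D'.card + 1) = 0 := by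
      apply Polynomial.coeff_eq_zero_of_natDegree_lt
      exact lt_of_le_of_lt (det_natDegree_le D' (M.updateRow r u) hcu hd1u) (by omega)
    rw [hzero, add_zero, ih (M.updateRow r w) hcw hd1w]
    congr 1
    apply Matrix.ext; intro i j
    simp only [Matrix.of_apply]
    by_cases h : i = r
    · subst h
      rw [Matrix.updateRow_self]
      simp [hw, hr, Polynomial.coeff_C]
    · rw [Matrix.updateRow_ne h]
      by_cases h2 : i ∈ D' <;> simp [h, h2, Finset.mem_insert]

end PolyMatrix

private noncomputable def rowBound {n : ℕ} (M : Matrix (Fin n) (Fin n) (Polynomial ℝ)) (i : Fin n) : ℝ :=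
  Real.sqrt (∑ j, ((M i j).coeff 0)^2) + Real.sqrt (∑ j, ((M i j).coeff 1)^2)

private lemma rowBound_nonneg {n : ℕ} (M : Matrix (Fin n) (Fin n) (Polynomial ℝ)) (i : Fin n) :
    0 ≤ rowBound M i := add_nonneg (Real.sqrt_nonneg _) (Real.sqrt_nonneg _)

private lemma det_L1_le {n : ℕ} (D : Finset (Fin n)) :
    ∀ (M : Matrix (Fin n) (Fin n) (Polynomial ℝ)),
    (∀ i, i ∉ D → ∀ j, (M i j).natDegree = 0) →
    (∀ i j, (M i j).natDegree ≤ 1) →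
    L1 M.det ≤ ∏ i, rowBound M i := by
  induction D using Finset.induction_on with
  | empty =>
    intro M hconst _
    have hMeq : M = (Matrix.of fun i j => (M i j).coeff 0).map Polynomial.C := by
      apply Matrix.ext; intro i j
      rw [Matrix.map_apply, Matrix.of_apply]
      exact Polynomial.eq_C_of_natDegree_eq_zero (hconst i (Finset.notMem_empty i) j)
    have h1 : L1 M.det = |(Matrix.of fun i j => (M i j).coeff 0).det| := by
      conv_lhs => rw [hMeq]
      rw [← RingHom.mapMatrix_apply, ← RingHom.map_det]
      exact L1_C _
    rw [h1]
    refine le_trans (abs_det_le_prod _) (Finset.prod_le_prod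
      (fun i _ => Real.sqrt_nonneg _) (fun i _ => ?_))
    rw [rowBound]
    have : Real.sqrt (∑ j, ((Matrix.of fun i j => (M i j).coeff 0) i j)^2)
        = Real.sqrt (∑ j, ((M i j).coeff 0)^2) := rfl
    rw [this]
    exact le_add_of_nonneg_right (Real.sqrt_nonneg _)
  | @insert r D' hr ih =>
    intro M hconst hdeg1
    set u : Fin n → Polynomial ℝ := fun j => Polynomial.C ((M r j).coeff 0) with hu
    set w : Fin n → Polynomial ℝ := fun j => Polynomial.C ((M r j).coeff 1) with hw
    have hrow : M r = ((Polynomial.X : Polynomial ℝ) • w) + u := by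
      funext j
      have h1 : (((Polynomial.X : Polynomial ℝ) • w) + u) j
          = Polynomial.X * Polynomial.C ((M r j).coeff 1) + Polynomial.C ((M r j).coeff 0) := rfl
      rw [h1]
      conv_lhs => rw [Polynomial.eq_X_add_C_of_natDegree_le_one (hdeg1 r j)]
      ring
    have hM : M = M.updateRow r (((Polynomial.X : Polynomial ℝ) • w) + u) := by
      rw [← hrow, Matrix.updateRow_eq_self]
    have hsplit : M.det = Polynomial.X * (M.updateRow r w).det + (M.updateRow r u).det := by
      conv_lhs => rw [hM]
      rw [Matrix.det_updateRow_add, Matrix.det_updateRow_smul]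
    have hcu : ∀ i, i ∉ D' → ∀ j, ((M.updateRow r u) i j).natDegree = 0 := by
      intro i hi j
      by_cases h : i = r
      · subst h; rw [Matrix.updateRow_self]; simp [hu]
      · rw [Matrix.updateRow_ne h]
        exact hconst i (by simp [h, hi]) j
    have hcw : ∀ i, i ∉ D' → ∀ j, ((M.updateRow r w) i j).natDegree = 0 := by
      intro i hi j
      by_cases h : i = r
      · subst h; rw [Matrix.updateRow_self]; simp [hw]
      · rw [Matrix.updateRow_ne h]
        exact hconst i (by simp [h, hi]) j
    have hd1u : ∀ i j, ((M.updateRow r u) i j).natDegree ≤ 1 := by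
      intro i j
      by_cases h : i = r
      · subst h; rw [Matrix.updateRow_self]; simp [hu]
      · rw [Matrix.updateRow_ne h]; exact hdeg1 i j
    have hd1w : ∀ i j, ((M.updateRow r w) i j).natDegree ≤ 1 := by
      intro i j
      by_cases h : i = r
      · subst h; rw [Matrix.updateRow_self]; simp [hw]
      · rw [Matrix.updateRow_ne h]; exact hdeg1 i j
    -- off-diagonal rowBounds agree
    have hoffu : ∀ i, i ≠ r → rowBound (M.updateRow r u) i = rowBound M i := by
      intro i h; unfold rowBound
      rw [show (M.updateRow r u) i = M i from Matrix.updateRow_ne h]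
    have hoffw : ∀ i, i ≠ r → rowBound (M.updateRow r w) i = rowBound M i := by
      intro i h; unfold rowBound
      rw [show (M.updateRow r w) i = M i from Matrix.updateRow_ne h]
    have hru : rowBound (M.updateRow r u) r = Real.sqrt (∑ j, ((M r j).coeff 0)^2) := by
      unfold rowBound
      rw [Matrix.updateRow_self]
      have h0 : ∀ j : Fin n, ((u j).coeff 1) = 0 := by
        intro j; simp [hu, Polynomial.coeff_C]
      have h1 : ∀ j : Fin n, ((u j).coeff 0) = (M r j).coeff 0 := by
        intro j; simp [hu]
      simp only [h0, h1]
      simp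
    have hrw : rowBound (M.updateRow r w) r = Real.sqrt (∑ j, ((M r j).coeff 1)^2) := by
      unfold rowBound
      rw [Matrix.updateRow_self]
      have h0 : ∀ j : Fin n, ((w j).coeff 1) = 0 := by
        intro j; simp [hw, Polynomial.coeff_C]
      have h1 : ∀ j : Fin n, ((w j).coeff 0) = (M r j).coeff 1 := by
        intro j; simp [hw]
      simp only [h0, h1]
      simp
    have hprest : 0 ≤ ∏ i ∈ Finset.univ.erase r, rowBound M i :=
      Finset.prod_nonneg fun i _ => rowBound_nonneg _ _
    calc L1 M.det ≤ L1 (Polynomial.X * (M.updateRow r w).det) + L1 ((M.updateRow r u).det) := by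
          rw [hsplit]; exact L1_add_le _ _
      _ ≤ L1 ((M.updateRow r w).det) + L1 ((M.updateRow r u).det) :=
          add_le_add_left (L1_X_mul_le _) _
      _ ≤ (∏ i, rowBound (M.updateRow r w) i) + ∏ i, rowBound (M.updateRow r u) i :=
          add_le_add (ih _ hcw hd1w) (ih _ hcu hd1u)
      _ = (Real.sqrt (∑ j, ((M r j).coeff 1)^2) + Real.sqrt (∑ j, ((M r j).coeff 0)^2))
            * ∏ i ∈ Finset.univ.erase r, rowBound M i := by
          rw [← Finset.mul_prod_erase Finset.univ _ (Finset.mem_univ r),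
            ← Finset.mul_prod_erase Finset.univ _ (Finset.mem_univ r), hru, hrw]
          rw [Finset.prod_congr rfl (fun i hi => hoffw i (Finset.ne_of_mem_erase hi)),
            Finset.prod_congr rfl (fun i hi => hoffu i (Finset.ne_of_mem_erase hi))]
          ring
      _ = ∏ i, rowBound M i := by
          rw [← Finset.mul_prod_erase Finset.univ _ (Finset.mem_univ r)]
          rw [rowBound, add_comm (Real.sqrt (∑ j, ((M r j).coeff 1)^2))]

private lemma shift_sum (N s : ℕ) (g : ℕ → ℝ) :
    ∑ j ∈ Finset.range N, (if s ≤ j then g (j - s) else 0)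
      = ∑ k ∈ Finset.range (N - s), g k := by
  rw [← Finset.sum_filter]
  have h1 : (Finset.range N).filter (fun j => s ≤ j) = Finset.Ico s N := by
    ext j; simp [Finset.mem_filter, Finset.mem_range, Finset.mem_Ico]; omega
  rw [h1, Finset.sum_Ico_eq_sum_range]
  exact Finset.sum_congr rfl fun k _ => by congr 1; omega

private lemma sum_sq_le (d : ℕ) :
    ∑ k ∈ Finset.range d, (((k:ℝ)+1))^2 ≤ ((d:ℝ)+1)^3/3 := by
  induction d with
  | zero => norm_num
  | succ d ih =>
    rw [Finset.sum_range_succ]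
    push_cast
    push_cast at ih
    nlinarith [ih, (by positivity : (0:ℝ) ≤ (d:ℝ))]

private lemma row_sum_eq (x : ℝ) (Q : Polynomial ℝ) (N s : ℕ) (hs : Q.natDegree < N - s) :
    ∑ j ∈ Finset.range N, (if s ≤ j then Q.coeff (j - s) * x^j else 0)
      = Q.eval x * x^s := by
  have h1 : ∀ j ∈ Finset.range N, (if s ≤ j then Q.coeff (j - s) * x^j else 0)
      = (if s ≤ j then (fun k => Q.coeff k * x^k * x^s) (j - s) else 0) := by
    intro j _
    by_cases h : s ≤ j
    · simp only [h, if_true]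
      have hj : j - s + s = j := by omega
      rw [mul_assoc, ← pow_add, hj]
    · simp [h]
  rw [Finset.sum_congr rfl h1, shift_sum N s (fun k => Q.coeff k * x^k * x^s)]
  rw [← Finset.sum_mul]
  congr 1
  rw [Polynomial.eval_eq_sum_range' (lt_of_le_of_lt (le_refl _) hs)]
section Interior

variable (P : Polynomial ℤ) (d τ : ℕ)

private theorem interior_bound (hd : 1 ≤ d) (hdeg : P.natDegree = d)
    (hτ : ∀ i, |P.coeff i| ≤ 2 ^ τ - 1)
    (x m : ℝ) (hm0 : 0 < m) (hm1 : m < 1)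
    (heval : Polynomial.aeval x P = m)
    (hder : Polynomial.aeval x (Polynomial.derivative P) = 0) :
    (3:ℝ) ^ ((d:ℝ)/2) / (2 ^ ((2*d - 1) * τ) * ((d:ℝ)+1) ^ (2*(d:ℝ) - 1/2)) < m := by
  set N := 2*d - 1 with hN
  have hNpos : 0 < N := by omega
  have hPne : P ≠ 0 := fun h => by simp [h] at hdeg; omega
  have hlead : P.coeff d ≠ 0 := by
    rw [← hdeg]
    exact Polynomial.leadingCoeff_ne_zero.mpr hPne
  -- the Sylvester-style matrix
  set S : Matrix (Fin N) (Fin N) (Polynomial ℤ) := Matrix.of fun i j =>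
    if (i:ℕ) < d - 1 then
      (if (i:ℕ) ≤ (j:ℕ) then
        (if (j:ℕ) = (i:ℕ) then Polynomial.X else 0) - Polynomial.C (P.coeff ((j:ℕ) - (i:ℕ)))
      else 0)
    else
      (if (i:ℕ) - (d - 1) ≤ (j:ℕ) then
        Polynomial.C ((Polynomial.derivative P).coeff ((j:ℕ) - ((i:ℕ) - (d - 1))))
      else 0) with hS
  set D : Finset (Fin N) := Finset.univ.filter (fun i : Fin N => (i:ℕ) < d - 1) with hD
  have hmemD : ∀ i : Fin N, i ∈ D ↔ (i:ℕ) < d - 1 := by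
    intro i; simp [hD]
  have hcard : D.card = d - 1 := by
    have hDmap : D = Finset.map ⟨fun k : Fin (d-1) => (⟨(k:ℕ), by omega⟩ : Fin N), by
        intro a b hab
        simpa [Fin.ext_iff] using hab⟩ Finset.univ := by
      ext i
      simp only [hD, Finset.mem_filter, Finset.mem_univ, true_and, Finset.mem_map,
        Function.Embedding.coeFn_mk]
      constructor
      · intro hi
        exact ⟨⟨(i:ℕ), hi⟩, rfl⟩
      · rintro ⟨k, rfl⟩
        exact k.2
    rw [hDmap, Finset.card_map, Finset.card_univ, Fintype.card_fin]
  have hconst : ∀ i, i ∉ D → ∀ j, (S i j).natDegree = 0 := by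
    intro i hi j
    have hi' : ¬ (i:ℕ) < d - 1 := fun h => hi ((hmemD i).mpr h)
    simp only [hS, Matrix.of_apply, hi', if_false]
    split <;> simp
  have hdeg1 : ∀ i j, (S i j).natDegree ≤ 1 := by
    intro i j
    simp only [hS, Matrix.of_apply]
    by_cases h1 : (i:ℕ) < d - 1 <;> simp only [h1, if_true, if_false]
    · by_cases h2 : (i:ℕ) ≤ (j:ℕ) <;> simp only [h2, if_true, if_false]
      · by_cases h3 : (j:ℕ) = (i:ℕ) <;> simp only [h3, if_true, if_false]
        · exact le_of_eq (Polynomial.natDegree_X_sub_C _)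
        · simp
      · simp
    · split <;> simp
  set R : Polynomial ℤ := S.det with hR
  have hd1 : (Polynomial.derivative P).natDegree ≤ d - 1 := by
    have := Polynomial.natDegree_derivative_le P
    omega
  have hRtop : R.coeff (d-1) = (P.coeff d * d)^d := by
    have h1 := det_coeff_card D S hconst hdeg1
    rw [hcard] at h1
    rw [hR, h1]
    set E0 : Matrix (Fin N) (Fin N) ℤ := Matrix.of fun i j =>
      if (i:ℕ) < d - 1 then (if (j:ℕ) = (i:ℕ) then 1 else 0)
      else (if (i:ℕ) - (d-1) ≤ (j:ℕ) then
        (Polynomial.derivative P).coeff ((j:ℕ) - ((i:ℕ) - (d-1))) else 0) with hE0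
    have hMeq : (Matrix.of fun i j => if i ∈ D then (S i j).coeff 1 else (S i j).coeff 0) = E0 := by
      apply Matrix.ext; intro i j
      simp only [Matrix.of_apply, hE0]
      by_cases h1 : (i:ℕ) < d - 1
      · rw [if_pos ((hmemD i).mpr h1), if_pos h1]
        simp only [hS, Matrix.of_apply, h1, if_true]
        by_cases h2 : (i:ℕ) ≤ (j:ℕ)
        · by_cases h3 : (j:ℕ) = (i:ℕ)
          · rw [if_pos h2, if_pos h3, if_pos h3, Polynomial.coeff_sub,
              Polynomial.coeff_X_one, Polynomial.coeff_C]
            norm_num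
          · rw [if_pos h2, if_neg h3, if_neg h3, Polynomial.coeff_sub, Polynomial.coeff_C,
              Polynomial.coeff_zero]
            norm_num
        · have h3 : ¬ (j:ℕ) = (i:ℕ) := by omega
          simp [h2, h3]
      · rw [if_neg (fun hc => h1 ((hmemD i).mp hc)), if_neg h1]
        simp only [hS, Matrix.of_apply, h1, if_false]
        split <;> simp
    rw [hMeq]
    have ht : E0.BlockTriangular OrderDual.toDual := by
      intro a b hab
      have hab' : (a:ℕ) < (b:ℕ) := hab
      simp only [hE0, Matrix.of_apply]
      by_cases h1 : (a:ℕ) < d - 1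
      · rw [if_pos h1, if_neg (by omega)]
      · rw [if_neg h1]
        rw [if_pos (by omega)]
        apply Polynomial.coeff_eq_zero_of_natDegree_lt
        omega
    rw [Matrix.det_of_lowerTriangular E0 ht]
    have hdiag : ∀ i : Fin N, E0 i i = if (i:ℕ) < d - 1 then 1 else (P.coeff d * d) := by
      intro i
      simp only [hE0, Matrix.of_apply]
      by_cases h1 : (i:ℕ) < d - 1
      · simp [h1]
      · rw [if_neg h1, if_neg h1, if_pos (by omega)]
        have h2 : (i:ℕ) - ((i:ℕ) - (d-1)) = d - 1 := by omega
        rw [h2, Polynomial.coeff_derivative]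
        have h3 : d - 1 + 1 = d := by omega
        rw [h3]
        push_cast [Nat.cast_sub hd]
        ring
    rw [Finset.prod_congr rfl (fun i _ => hdiag i)]
    rw [Finset.prod_ite]
    rw [Finset.prod_const, Finset.prod_const]
    have hcard2 : (Finset.univ.filter (fun i : Fin N => ¬ (i:ℕ) < d - 1)).card = d := by
      have := Finset.card_filter_add_card_filter_not
        (s := (Finset.univ : Finset (Fin N))) (p := fun i : Fin N => (i:ℕ) < d - 1)
      rw [← hD] at this
      simp only [Finset.card_univ, Fintype.card_fin] at this
      omega
    rw [hcard2, one_pow, one_mul]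
  have hRne : R ≠ 0 := by
    intro h
    rw [h] at hRtop
    simp only [Polynomial.coeff_zero] at hRtop
    have : P.coeff d * d ≠ 0 := mul_ne_zero hlead (by exact_mod_cast (by omega : d ≠ 0))
    exact pow_ne_zero d this hRtop.symm
  set Pm : Polynomial ℝ := P.map (Int.castRingHom ℝ) with hPm
  have hPmdeg : Pm.natDegree ≤ d := le_trans Polynomial.natDegree_map_le (le_of_eq hdeg)
  have hPmcoeff : ∀ k, Pm.coeff k = ((P.coeff k : ℤ) : ℝ) := fun k => Polynomial.coeff_map _ _
  have hPmdcoeff : ∀ k, (Polynomial.derivative Pm).coeff k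
      = (((Polynomial.derivative P).coeff k : ℤ) : ℝ) := by
    intro k
    rw [hPm, Polynomial.derivative_map]
    exact Polynomial.coeff_map _ _
  have hPme : Pm.eval x = m := by
    rw [hPm, Polynomial.eval_map, ← algebraMap_int_eq, ← Polynomial.aeval_def, heval]
  have hPmd : (Polynomial.derivative Pm).eval x = 0 := by
    rw [hPm, Polynomial.derivative_map, Polynomial.eval_map, ← algebraMap_int_eq,
      ← Polynomial.aeval_def, hder]
  have hPmddeg : (Polynomial.derivative Pm).natDegree ≤ d - 1 := by
    have := Polynomial.natDegree_derivative_le Pm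
    omega
  have hRm : Polynomial.aeval m R = 0 := by
    set φ : Polynomial ℤ →+* ℝ := (Polynomial.aeval m : Polynomial ℤ →ₐ[ℤ] ℝ).toRingHom with hφ
    have hent : ∀ i j : Fin N, φ (S i j) =
        (if (i:ℕ) < d - 1 then
          (if (i:ℕ) ≤ (j:ℕ) then
            ((if (j:ℕ) = (i:ℕ) then m else 0) - ((P.coeff ((j:ℕ)-(i:ℕ)) : ℤ):ℝ))
          else 0)
        else
          (if (i:ℕ) - (d-1) ≤ (j:ℕ) then
            (((Polynomial.derivative P).coeff ((j:ℕ) - ((i:ℕ)-(d-1))) : ℤ):ℝ)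
          else 0)) := by
      intro i j
      simp only [hS, Matrix.of_apply]
      split_ifs with h1 h2 h3 <;> simp [hφ]
    have hmap : Polynomial.aeval m R = (S.map φ).det := by
      rw [hR, ← RingHom.mapMatrix_apply, ← RingHom.map_det]
      rfl
    rw [hmap, ← Matrix.exists_mulVec_eq_zero_iff]
    refine ⟨fun j : Fin N => x ^ (j:ℕ), ?_, ?_⟩
    · intro h
      have h0 := congr_fun h ⟨0, hNpos⟩
      simp at h0
    · funext i
      simp only [Matrix.mulVec, dotProduct, Matrix.map_apply, Pi.zero_apply]
      by_cases hi : (i:ℕ) < d - 1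
      · have hsum : ∑ jj : Fin N, φ (S i jj) * x ^ (jj:ℕ)
            = ∑ jn ∈ Finset.range N, ((if jn = (i:ℕ) then m * x^(i:ℕ) else 0)
              - (if (i:ℕ) ≤ jn then Pm.coeff (jn - (i:ℕ)) * x^jn else 0)) := by
          rw [← Fin.sum_univ_eq_sum_range (fun jn => (if jn = (i:ℕ) then m * x^(i:ℕ) else 0)
              - (if (i:ℕ) ≤ jn then Pm.coeff (jn - (i:ℕ)) * x^jn else 0))]
          apply Finset.sum_congr rfl
          intro jj _
          rw [hent i jj, if_pos hi]
          by_cases h2 : (i:ℕ) ≤ (jj:ℕ)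
          · by_cases h3 : (jj:ℕ) = (i:ℕ)
            · rw [if_pos h2, if_pos h3, if_pos h3, if_pos h2, hPmcoeff, h3]
              ring
            · rw [if_pos h2, if_neg h3, if_neg h3, if_pos h2, hPmcoeff]
              ring
          · have h3 : ¬ (jj:ℕ) = (i:ℕ) := by omega
            rw [if_neg h2, if_neg h3, if_neg h2]
            ring
        rw [hsum, Finset.sum_sub_distrib]
        rw [Finset.sum_ite_eq' (Finset.range N) ((i:ℕ)) (fun _ => m * x^(i:ℕ))]
        rw [if_pos (Finset.mem_range.mpr i.2)]
        rw [row_sum_eq x Pm N (i:ℕ) (by omega)]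
        rw [hPme]
        ring
      · have hsum : ∑ jj : Fin N, φ (S i jj) * x ^ (jj:ℕ)
            = ∑ jn ∈ Finset.range N, (if (i:ℕ) - (d-1) ≤ jn then
                (Polynomial.derivative Pm).coeff (jn - ((i:ℕ)-(d-1))) * x^jn else 0) := by
          rw [← Fin.sum_univ_eq_sum_range (fun jn => if (i:ℕ) - (d-1) ≤ jn then
                (Polynomial.derivative Pm).coeff (jn - ((i:ℕ)-(d-1))) * x^jn else 0)]
          apply Finset.sum_congr rfl
          intro jj _
          rw [hent i jj, if_neg hi]
          by_cases h2 : (i:ℕ) - (d-1) ≤ (jj:ℕ)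
          · rw [if_pos h2, if_pos h2, hPmdcoeff]
          · rw [if_neg h2, if_neg h2]
            ring
        rw [hsum]
        have hiN : (i:ℕ) < N := i.2
        rw [row_sum_eq x (Polynomial.derivative Pm) N ((i:ℕ) - (d-1)) (by omega)]
        rw [hPmd]
        ring
  -- the real version
  set Rr : Polynomial ℝ := R.map (Int.castRingHom ℝ) with hRr
  have hRrne : Rr ≠ 0 := by
    rw [hRr]
    intro h
    exact hRne (Polynomial.map_injective (Int.castRingHom ℝ) Int.cast_injective (by simpa using h))
  have hRrm : Rr.eval m = 0 := by
    rw [hRr, Polynomial.eval_map]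
    exact hRm
  -- L1 bound
  have hL1 : L1 Rr ≤ ((2:ℝ)^τ * Real.sqrt ((d:ℝ)+1))^(d-1)
      * ((2:ℝ)^τ * Real.sqrt (((d:ℝ)+1)^3/3))^d := by
    set Hr : ℝ := (2:ℝ)^τ - 1 with hHrdef
    have h2t : (1:ℝ) ≤ 2^τ := one_le_pow₀ (by norm_num)
    have hHr0 : 0 ≤ Hr := by rw [hHrdef]; linarith
    have hHrle : Hr ≤ 2^τ := by rw [hHrdef]; linarith
    have habsk : ∀ k, |((P.coeff k : ℤ) : ℝ)| ≤ Hr := by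
      intro k
      rw [← Int.cast_abs]
      have h1 : ((|P.coeff k| : ℤ):ℝ) ≤ (((2^τ - 1 : ℤ)):ℝ) := Int.cast_le.mpr (hτ k)
      rw [hHrdef]
      refine le_trans h1 (le_of_eq ?_)
      push_cast
      ring
    set ψ : Polynomial ℤ →+* Polynomial ℝ := Polynomial.mapRingHom (Int.castRingHom ℝ) with hψ
    set Sr : Matrix (Fin N) (Fin N) (Polynomial ℝ) := S.map ψ with hSr
    have hdetSr : Rr = Sr.det := by
      rw [hRr, hSr, ← RingHom.mapMatrix_apply, ← RingHom.map_det, hR]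
      rfl
    have hSrc : ∀ i j t, (Sr i j).coeff t = (((S i j).coeff t : ℤ) : ℝ) := by
      intro i j t
      rw [hSr, Matrix.map_apply, hψ, Polynomial.coe_mapRingHom]
      exact Polynomial.coeff_map _ _
    have hconst' : ∀ i, i ∉ D → ∀ jj, (Sr i jj).natDegree = 0 := by
      intro i hi jj
      rw [hSr, Matrix.map_apply, hψ, Polynomial.coe_mapRingHom]
      exact Nat.le_zero.mp (le_trans Polynomial.natDegree_map_le (le_of_eq (hconst i hi jj)))
    have hdeg1' : ∀ i jj, (Sr i jj).natDegree ≤ 1 := by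
      intro i jj
      rw [hSr, Matrix.map_apply, hψ, Polynomial.coe_mapRingHom]
      exact le_trans Polynomial.natDegree_map_le (hdeg1 i jj)
    have hrowg : ∀ i : Fin N, (i:ℕ) < d - 1 → rowBound Sr i ≤ (2:ℝ)^τ * Real.sqrt ((d:ℝ)+1) := by
      intro i hi
      have hc0 : ∑ jj, ((Sr i jj).coeff 0)^2 = ∑ k ∈ Finset.range (d+1), ((P.coeff k : ℤ):ℝ)^2 := by
        have hterm : ∀ jj : Fin N, ((Sr i jj).coeff 0)^2
            = (fun jn => if (i:ℕ) ≤ jn then ((P.coeff (jn-(i:ℕ)) : ℤ):ℝ)^2 else 0) (jj:ℕ) := by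
          intro jj
          rw [hSrc]
          simp only [hS, Matrix.of_apply, hi, if_true]
          by_cases h2 : (i:ℕ) ≤ (jj:ℕ)
          · rw [if_pos h2, if_pos h2, Polynomial.coeff_sub, Polynomial.coeff_C_zero]
            have hX0 : ((if (jj:ℕ) = (i:ℕ) then (Polynomial.X : Polynomial ℤ) else 0)).coeff 0 = 0 := by
              split <;> simp
            rw [hX0, zero_sub, Int.cast_neg, neg_sq]
          · rw [if_neg h2, if_neg h2]
            simp
        rw [Finset.sum_congr rfl (fun jj _ => hterm jj)]
        rw [Fin.sum_univ_eq_sum_range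
          (fun jn => if (i:ℕ) ≤ jn then ((P.coeff (jn-(i:ℕ)) : ℤ):ℝ)^2 else 0) N]
        rw [shift_sum N (i:ℕ) (fun k => ((P.coeff k : ℤ):ℝ)^2)]
        apply (Finset.sum_subset (Finset.range_subset_range.mpr (by omega)) ?_).symm
        intro k _ hk
        have : P.coeff k = 0 := Polynomial.coeff_eq_zero_of_natDegree_lt (by
          rw [hdeg]
          simp only [Finset.mem_range, not_lt] at hk
          omega)
        rw [this]
        norm_num
      have hc1 : ∑ jj, ((Sr i jj).coeff 1)^2 = 1 := by
        have hterm : ∀ jj : Fin N, ((Sr i jj).coeff 1)^2 = if jj = i then 1 else 0 := by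
          intro jj
          rw [hSrc]
          simp only [hS, Matrix.of_apply, hi, if_true]
          by_cases h3 : jj = i
          · have h3' : (jj:ℕ) = (i:ℕ) := by rw [h3]
            rw [if_pos (le_of_eq h3'.symm), if_pos h3', if_pos h3]
            rw [Polynomial.coeff_sub, Polynomial.coeff_X_one, Polynomial.coeff_C]
            norm_num
          · have h3' : ¬ (jj:ℕ) = (i:ℕ) := fun hc => h3 (Fin.ext hc)
            rw [if_neg h3]
            by_cases h2 : (i:ℕ) ≤ (jj:ℕ)
            · rw [if_pos h2, if_neg h3', Polynomial.coeff_sub, Polynomial.coeff_C,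
                Polynomial.coeff_zero]
              norm_num
            · rw [if_neg h2]
              norm_num
        rw [Finset.sum_congr rfl (fun jj _ => hterm jj)]
        rw [Finset.sum_ite_eq' Finset.univ i (fun _ => (1:ℝ))]
        simp
      rw [rowBound, hc0, hc1, Real.sqrt_one]
      have hsumle : ∑ k ∈ Finset.range (d+1), ((P.coeff k : ℤ):ℝ)^2 ≤ ((d:ℝ)+1) * Hr^2 := by
        calc ∑ k ∈ Finset.range (d+1), ((P.coeff k : ℤ):ℝ)^2
            ≤ ∑ k ∈ Finset.range (d+1), Hr^2 := by
              apply Finset.sum_le_sum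
              intro k _
              rw [← sq_abs]
              exact pow_le_pow_left₀ (abs_nonneg _) (habsk k) 2
          _ = ((d:ℝ)+1) * Hr^2 := by
              rw [Finset.sum_const, Finset.card_range, nsmul_eq_mul]
              push_cast
              ring
      have hsqrt : Real.sqrt (∑ k ∈ Finset.range (d+1), ((P.coeff k : ℤ):ℝ)^2)
          ≤ Hr * Real.sqrt ((d:ℝ)+1) := by
        refine le_trans (Real.sqrt_le_sqrt hsumle) (le_of_eq ?_)
        rw [Real.sqrt_mul (by positivity), Real.sqrt_sq hHr0]
        ring
      have hd0 : (0:ℝ) ≤ (d:ℝ) := Nat.cast_nonneg d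
      have hs1 : (1:ℝ) ≤ Real.sqrt ((d:ℝ)+1) :=
        le_trans (le_of_eq Real.sqrt_one.symm) (Real.sqrt_le_sqrt (by linarith))
      calc Real.sqrt (∑ k ∈ Finset.range (d+1), ((P.coeff k : ℤ):ℝ)^2) + 1
          ≤ Hr * Real.sqrt ((d:ℝ)+1) + Real.sqrt ((d:ℝ)+1) := add_le_add hsqrt hs1
        _ = (Hr + 1) * Real.sqrt ((d:ℝ)+1) := by ring
        _ = (2:ℝ)^τ * Real.sqrt ((d:ℝ)+1) := by rw [hHrdef]; ring_nf
    have hrowf : ∀ i : Fin N, ¬ (i:ℕ) < d - 1 →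
        rowBound Sr i ≤ (2:ℝ)^τ * Real.sqrt (((d:ℝ)+1)^3/3) := by
      intro i hi
      have hc1 : ∑ jj, ((Sr i jj).coeff 1)^2 = 0 := by
        apply Finset.sum_eq_zero
        intro jj _
        rw [hSrc]
        simp only [hS, Matrix.of_apply, hi, if_false]
        by_cases h2 : (i:ℕ) - (d-1) ≤ (jj:ℕ)
        · rw [if_pos h2, Polynomial.coeff_C]
          norm_num
        · rw [if_neg h2, Polynomial.coeff_zero]
          norm_num
      have hc0 : ∑ jj, ((Sr i jj).coeff 0)^2
          = ∑ k ∈ Finset.range d, (((Polynomial.derivative P).coeff k : ℤ):ℝ)^2 := by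
        have hterm : ∀ jj : Fin N, ((Sr i jj).coeff 0)^2
            = (fun jn => if (i:ℕ) - (d-1) ≤ jn then
                (((Polynomial.derivative P).coeff (jn-((i:ℕ)-(d-1))) : ℤ):ℝ)^2 else 0) (jj:ℕ) := by
          intro jj
          rw [hSrc]
          simp only [hS, Matrix.of_apply, hi, if_false]
          by_cases h2 : (i:ℕ) - (d-1) ≤ (jj:ℕ)
          · rw [if_pos h2, if_pos h2, Polynomial.coeff_C_zero]
          · rw [if_neg h2, if_neg h2]
            simp
        rw [Finset.sum_congr rfl (fun jj _ => hterm jj)]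
        rw [Fin.sum_univ_eq_sum_range
          (fun jn => if (i:ℕ) - (d-1) ≤ jn then
            (((Polynomial.derivative P).coeff (jn-((i:ℕ)-(d-1))) : ℤ):ℝ)^2 else 0) N]
        rw [shift_sum N ((i:ℕ) - (d-1)) (fun k => (((Polynomial.derivative P).coeff k : ℤ):ℝ)^2)]
        have hiN : (i:ℕ) < N := i.2
        apply (Finset.sum_subset (Finset.range_subset_range.mpr (by omega)) ?_).symm
        intro k _ hk
        have : (Polynomial.derivative P).coeff k = 0 := Polynomial.coeff_eq_zero_of_natDegree_lt (by
          simp only [Finset.mem_range, not_lt] at hk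
          omega)
        rw [this]
        norm_num
      have hsumle : ∑ k ∈ Finset.range d, (((Polynomial.derivative P).coeff k : ℤ):ℝ)^2
          ≤ Hr^2 * (((d:ℝ)+1)^3/3) := by
        calc ∑ k ∈ Finset.range d, (((Polynomial.derivative P).coeff k : ℤ):ℝ)^2
            ≤ ∑ k ∈ Finset.range d, Hr^2 * (((k:ℝ)+1))^2 := by
              apply Finset.sum_le_sum
              intro k _
              rw [Polynomial.coeff_derivative]
              have h1 : |((P.coeff (k+1) * (k+1) : ℤ):ℝ)| ≤ Hr * ((k:ℝ)+1) := by
                push_cast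
                rw [abs_mul]
                have h2 : |((k:ℝ)+1)| = ((k:ℝ)+1) := abs_of_pos (by positivity)
                rw [h2]
                apply mul_le_mul_of_nonneg_right _ (by positivity)
                have := habsk (k+1)
                push_cast at this
                exact this
              calc ((P.coeff (k+1) * ((k:ℤ)+1) : ℤ):ℝ)^2 = |((P.coeff (k+1) * (k+1) : ℤ):ℝ)|^2 := by
                    rw [sq_abs]
                _ ≤ (Hr * ((k:ℝ)+1))^2 := pow_le_pow_left₀ (abs_nonneg _) h1 2
                _ = Hr^2 * (((k:ℝ)+1))^2 := by ring
          _ = Hr^2 * ∑ k ∈ Finset.range d, (((k:ℝ)+1))^2 := by rw [Finset.mul_sum]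
          _ ≤ Hr^2 * (((d:ℝ)+1)^3/3) := mul_le_mul_of_nonneg_left (sum_sq_le d) (by positivity)
      rw [rowBound, hc0, hc1, Real.sqrt_zero, add_zero]
      calc Real.sqrt (∑ k ∈ Finset.range d, (((Polynomial.derivative P).coeff k : ℤ):ℝ)^2)
          ≤ Real.sqrt (Hr^2 * (((d:ℝ)+1)^3/3)) := Real.sqrt_le_sqrt hsumle
        _ = Hr * Real.sqrt (((d:ℝ)+1)^3/3) := by
            rw [Real.sqrt_mul (by positivity), Real.sqrt_sq hHr0]
        _ ≤ (2:ℝ)^τ * Real.sqrt (((d:ℝ)+1)^3/3) :=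
            mul_le_mul_of_nonneg_right hHrle (Real.sqrt_nonneg _)
    have hcard2 : (Finset.univ.filter (fun i : Fin N => ¬ (i:ℕ) < d - 1)).card = d := by
      have := Finset.card_filter_add_card_filter_not
        (s := (Finset.univ : Finset (Fin N))) (p := fun i : Fin N => (i:ℕ) < d - 1)
      rw [← hD] at this
      simp only [Finset.card_univ, Fintype.card_fin] at this
      omega
    calc L1 Rr = L1 Sr.det := by rw [hdetSr]
      _ ≤ ∏ i, rowBound Sr i := det_L1_le D Sr hconst' hdeg1'
      _ ≤ ∏ i : Fin N, (if (i:ℕ) < d - 1 then (2:ℝ)^τ * Real.sqrt ((d:ℝ)+1)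
            else (2:ℝ)^τ * Real.sqrt (((d:ℝ)+1)^3/3)) := by
          apply Finset.prod_le_prod (fun i _ => rowBound_nonneg _ _)
          intro i _
          by_cases hi : (i:ℕ) < d - 1
          · rw [if_pos hi]; exact hrowg i hi
          · rw [if_neg hi]; exact hrowf i hi
      _ = ((2:ℝ)^τ * Real.sqrt ((d:ℝ)+1))^(d-1) * ((2:ℝ)^τ * Real.sqrt (((d:ℝ)+1)^3/3))^d := by
          rw [Finset.prod_ite, Finset.prod_const, Finset.prod_const, ← hD, hcard, hcard2]
  -- trailing coefficient argument
  set j := Rr.natTrailingDegree with hj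
  have hcj : Rr.coeff j ≠ 0 := Polynomial.trailingCoeff_nonzero_iff_nonzero.mpr hRrne
  have hcoeffmap : ∀ k, Rr.coeff k = ((R.coeff k : ℤ) : ℝ) := fun k => Polynomial.coeff_map _ _
  have hcj1 : 1 ≤ |Rr.coeff j| := by
    have hZ : R.coeff j ≠ 0 := by
      intro h; apply hcj; rw [hcoeffmap j, h]; simp
    rw [hcoeffmap j, ← Int.cast_abs]
    exact_mod_cast Int.one_le_abs hZ
  set SUM := ∑ k ∈ Rr.support.erase j, |Rr.coeff k| with hSUM
  have hsplitL1 : SUM + |Rr.coeff j| = L1 Rr := by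
    rw [hSUM, L1]
    exact Finset.sum_erase_add _ _ (Polynomial.mem_support_iff.mpr hcj)
  have honeMARK : 1 ≤ m * SUM := by
    have hjsupp : j ∈ Rr.support := Polynomial.mem_support_iff.mpr hcj
    have hsupp : ∀ k ∈ Rr.support.erase j, j + 1 ≤ k := by
      intro k hk
      have h1 := Finset.mem_of_mem_erase hk
      have h2 := Finset.ne_of_mem_erase hk
      have h3 : j ≤ k := Polynomial.natTrailingDegree_le_of_ne_zero
        (Polynomial.mem_support_iff.mp h1)
      omega
    have hsum0 : ∑ k ∈ Rr.support, Rr.coeff k * m^k = 0 := by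
      have h5 := Polynomial.eval_eq_sum (p := Rr) (x := m)
      rw [Polynomial.sum_def] at h5
      rw [← h5]; exact hRrm
    have heq : Rr.coeff j * m^j + ∑ k ∈ Rr.support.erase j, Rr.coeff k * m^k = 0 :=
      (Finset.add_sum_erase _ (fun k => Rr.coeff k * m^k) hjsupp).trans hsum0
    have habs : |Rr.coeff j| * m^j ≤ SUM * (m^(j+1)) := by
      have h1 : Rr.coeff j * m^j = -∑ k ∈ Rr.support.erase j, Rr.coeff k * m^k := by
        linarith [heq]
      calc |Rr.coeff j| * m^j = |Rr.coeff j * m^j| := by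
            rw [abs_mul, abs_pow, abs_of_pos hm0]
        _ = |∑ k ∈ Rr.support.erase j, Rr.coeff k * m^k| := by rw [h1, abs_neg]
        _ ≤ ∑ k ∈ Rr.support.erase j, |Rr.coeff k * m^k| := Finset.abs_sum_le_sum_abs _ _
        _ ≤ ∑ k ∈ Rr.support.erase j, |Rr.coeff k| * m^(j+1) := by
            apply Finset.sum_le_sum
            intro k hk
            rw [abs_mul, abs_pow, abs_of_pos hm0]
            exact mul_le_mul_of_nonneg_left
              (pow_le_pow_of_le_one (le_of_lt hm0) (le_of_lt hm1) (hsupp k hk))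
              (abs_nonneg _)
        _ = SUM * (m^(j+1)) := by rw [hSUM, Finset.sum_mul]
    have hmj : (0:ℝ) < m^j := pow_pos hm0 j
    have : 1 * m^j ≤ (m * SUM) * m^j := by
      calc 1 * m^j = m^j := one_mul _
        _ ≤ |Rr.coeff j| * m^j := le_mul_of_one_le_left (le_of_lt hmj) hcj1
        _ ≤ SUM * (m^(j+1)) := habs
        _ = (m * SUM) * m^j := by ring
    exact le_of_mul_le_mul_right (by linarith) hmj
  -- numeric conclusion
  have hone := honeMARK
  set a : ℝ := (d:ℝ) + 1 with ha
  have ha0 : (0:ℝ) < a := by positivity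
  set F : ℝ := 2 ^ ((2*d - 1) * τ) * a ^ (2*(d:ℝ) - 1/2) with hF
  have hF0 : 0 < F := by
    rw [hF]
    have h2 : (0:ℝ) < 2 ^ ((2*d - 1) * τ) := by positivity
    have h3 : (0:ℝ) < a ^ (2*(d:ℝ) - 1/2) := Real.rpow_pos_of_pos ha0 _
    positivity
  have h3pos : (0:ℝ) < (3:ℝ)^((d:ℝ)/2) := Real.rpow_pos_of_pos (by norm_num) _
  have h1 : (Real.sqrt a)^(d-1) = a ^ (((d:ℝ)-1)/2) := by
    rw [Real.sqrt_eq_rpow, ← Real.rpow_natCast (a ^ ((1:ℝ)/2)) (d-1),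
      ← Real.rpow_mul ha0.le]
    congr 1
    push_cast [Nat.cast_sub hd]
    ring
  have h2 : (Real.sqrt (a^3/3))^d = a ^ (3*(d:ℝ)/2) / (3:ℝ) ^ ((d:ℝ)/2) := by
    rw [Real.sqrt_eq_rpow, ← Real.rpow_natCast ((a^3/3) ^ ((1:ℝ)/2)) d,
      ← Real.rpow_mul (by positivity)]
    rw [Real.div_rpow (by positivity) (by norm_num : (0:ℝ) ≤ 3)]
    rw [← Real.rpow_natCast a 3, ← Real.rpow_mul ha0.le]
    congr 1
    · congr 1
      push_cast
      ring
    · congr 1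
      ring
  have h3 : ((2:ℝ)^τ) ^ (d-1) * ((2:ℝ)^τ)^d = 2^((2*d-1)*τ) := by
    rw [← pow_mul, ← pow_mul, ← pow_add]
    congr 1
    obtain ⟨e, rfl⟩ : ∃ e, d = e + 1 := ⟨d-1, by omega⟩
    have he1 : e + 1 - 1 = e := rfl
    have he2 : 2*(e+1)-1 = 2*e+1 := by omega
    rw [he1, he2]
    ring
  have h4 : a ^ (((d:ℝ)-1)/2) * a ^ (3*(d:ℝ)/2) = a ^ (2*(d:ℝ) - 1/2) := by
    rw [← Real.rpow_add ha0]
    congr 1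
    ring
  have hK'eq : ((2:ℝ)^τ * Real.sqrt a)^(d-1) * ((2:ℝ)^τ * Real.sqrt (a^3/3))^d
      = F / (3:ℝ)^((d:ℝ)/2) := by
    calc ((2:ℝ)^τ * Real.sqrt a)^(d-1) * ((2:ℝ)^τ * Real.sqrt (a^3/3))^d
        = (((2:ℝ)^τ)^(d-1) * ((2:ℝ)^τ)^d)
          * (a ^ (((d:ℝ)-1)/2) * a ^ (3*(d:ℝ)/2)) / (3:ℝ)^((d:ℝ)/2) := by
          rw [mul_pow, mul_pow, h1, h2]
          ring
      _ = F / (3:ℝ)^((d:ℝ)/2) := by rw [h3, h4, hF]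
  have hSUMlt : SUM < F / (3:ℝ)^((d:ℝ)/2) := by
    have := hL1
    rw [hK'eq] at this
    linarith [hcj1, hsplitL1]
  have hfinal : 1 < m * (F / (3:ℝ)^((d:ℝ)/2)) :=
    lt_of_le_of_lt hone (mul_lt_mul_of_pos_left hSUMlt hm0)
  rw [show (3:ℝ) ^ ((d:ℝ)/2) / (2 ^ ((2*d - 1) * τ) * ((d:ℝ)+1) ^ (2*(d:ℝ) - 1/2))
      = (3:ℝ) ^ ((d:ℝ)/2) / F from by rw [hF, ha]]
  rw [div_lt_iff₀ hF0]
  calc (3:ℝ) ^ ((d:ℝ)/2) = ((3:ℝ) ^ ((d:ℝ)/2)) * 1 := (mul_one _).symm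
    _ < ((3:ℝ) ^ ((d:ℝ)/2)) * (m * (F / (3:ℝ)^((d:ℝ)/2))) :=
        mul_lt_mul_of_pos_left hfinal h3pos
    _ = m * F := by field_simp

end Interior

end AuxiliaryDevelopment

theorem univariate_min_bound (P : Polynomial ℤ) (d τ : ℕ) (hd : 1 ≤ d)
    (hdeg : P.natDegree = d)
    (hτ : ∀ i, |P.coeff i| ≤ 2 ^ τ - 1)
    (hpos : ∀ x ∈ Icc (0:ℝ) 1, 0 < Polynomial.aeval x P)
    (m : ℝ) (hm : IsLeast ((fun x : ℝ => Polynomial.aeval x P) '' Icc (0:ℝ) 1) m) :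
    (3:ℝ) ^ ((d:ℝ)/2) / (2 ^ ((2*d - 1) * τ) * ((d:ℝ)+1) ^ (2*(d:ℝ) - 1/2)) < m := by
  obtain ⟨hmem, hlb⟩ := hm
  obtain ⟨x₀, hx₀, hx₀e⟩ := hmem
  simp only at hx₀e
  have hm0 : 0 < m := hx₀e ▸ hpos x₀ hx₀
  have hd1 : (1:ℝ) ≤ (d:ℝ) := by exact_mod_cast hd
  have hF0 : (0:ℝ) < 2 ^ ((2*d - 1) * τ) * ((d:ℝ)+1) ^ (2*(d:ℝ) - 1/2) := by
    have h3 : (0:ℝ) < ((d:ℝ)+1) ^ (2*(d:ℝ) - 1/2) := Real.rpow_pos_of_pos (by positivity) _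
    positivity
  by_cases hm1 : 1 ≤ m
  · -- RHS < 1 ≤ m
    have hsqrt3 : Real.sqrt 3 < 2 := by
      nlinarith [Real.sq_sqrt (by norm_num : (0:ℝ) ≤ 3), Real.sqrt_nonneg 3]
    have hstep1 : (3:ℝ)^((d:ℝ)/2) = ((3:ℝ)^((1:ℝ)/2))^((d:ℝ)) := by
      rw [← Real.rpow_mul (by norm_num : (0:ℝ) ≤ 3)]
      congr 1
      ring
    have hstep2 : ((3:ℝ)^((1:ℝ)/2))^((d:ℝ)) < ((d:ℝ)+1)^((d:ℝ)) := by
      apply Real.rpow_lt_rpow (Real.rpow_nonneg (by norm_num) _) _ (by linarith)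
      rw [← Real.sqrt_eq_rpow]
      linarith
    have hstep3 : ((d:ℝ)+1)^((d:ℝ)) ≤ ((d:ℝ)+1)^(2*(d:ℝ) - 1/2) :=
      Real.rpow_le_rpow_of_exponent_le (by linarith) (by linarith)
    have hstep4 : ((d:ℝ)+1)^(2*(d:ℝ) - 1/2)
        ≤ 2 ^ ((2*d - 1) * τ) * ((d:ℝ)+1) ^ (2*(d:ℝ) - 1/2) :=
      le_mul_of_one_le_left (Real.rpow_nonneg (by positivity) _) (one_le_pow₀ (by norm_num))
    have : (3:ℝ)^((d:ℝ)/2) < 2 ^ ((2*d - 1) * τ) * ((d:ℝ)+1) ^ (2*(d:ℝ) - 1/2) := by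
      rw [hstep1]
      exact lt_of_lt_of_le (lt_of_lt_of_le hstep2 hstep3) hstep4
    calc (3:ℝ) ^ ((d:ℝ)/2) / (2 ^ ((2*d - 1) * τ) * ((d:ℝ)+1) ^ (2*(d:ℝ) - 1/2))
        < 1 := (div_lt_one hF0).mpr this
      _ ≤ m := hm1
  · push_neg at hm1
    -- endpoints excluded
    have hx0ne : x₀ ≠ 0 := by
      intro h
      rw [h] at hx₀e
      have he : Polynomial.aeval (0:ℝ) P = ((P.coeff 0 : ℤ) : ℝ) := by
        rw [Polynomial.aeval_def, Polynomial.eval₂_at_zero, algebraMap_int_eq]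
        rfl
      rw [he] at hx₀e
      have h1 : (0:ℤ) < P.coeff 0 := by
        have := hm0
        rw [← hx₀e] at this
        exact_mod_cast this
      have h2 : (1:ℝ) ≤ ((P.coeff 0 : ℤ):ℝ) := by exact_mod_cast h1
      rw [hx₀e] at h2
      linarith
    have hx1ne : x₀ ≠ 1 := by
      intro h
      rw [h] at hx₀e
      have he : Polynomial.aeval (1:ℝ) P = ((P.eval 1 : ℤ) : ℝ) := by
        rw [Polynomial.aeval_def, Polynomial.eval₂_at_one, algebraMap_int_eq]
        rfl
      rw [he] at hx₀e
      have h1 : (0:ℤ) < P.eval 1 := by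
        have := hm0
        rw [← hx₀e] at this
        exact_mod_cast this
      have h2 : (1:ℝ) ≤ ((P.eval 1 : ℤ):ℝ) := by exact_mod_cast h1
      rw [hx₀e] at h2
      linarith
    have hIoo : x₀ ∈ Ioo (0:ℝ) 1 :=
      ⟨lt_of_le_of_ne hx₀.1 (Ne.symm hx0ne), lt_of_le_of_ne hx₀.2 hx1ne⟩
    -- derivative vanishes at x₀
    have hmin : IsMinOn (fun y : ℝ => Polynomial.aeval y P) (Icc (0:ℝ) 1) x₀ := by
      intro y hy
      simp only [Set.mem_setOf_eq, hx₀e]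
      exact hlb ⟨y, hy, rfl⟩
    have hlocal : IsLocalMin (fun y : ℝ => Polynomial.aeval y P) x₀ :=
      hmin.isLocalMin (Icc_mem_nhds hIoo.1 hIoo.2)
    have hfeq : (fun y : ℝ => Polynomial.aeval y P)
        = fun y => (P.map (Int.castRingHom ℝ)).eval y := by
      funext y
      rw [Polynomial.aeval_def, Polynomial.eval_map, algebraMap_int_eq]
    have hderiv0 : deriv (fun y : ℝ => Polynomial.aeval y P) x₀ = 0 :=
      hlocal.deriv_eq_zero
    have hder : Polynomial.aeval x₀ (Polynomial.derivative P) = 0 := by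
      have h1 : deriv (fun y : ℝ => Polynomial.aeval y P) x₀
          = (Polynomial.derivative (P.map (Int.castRingHom ℝ))).eval x₀ := by
        rw [hfeq]
        exact Polynomial.deriv _
      rw [h1] at hderiv0
      rw [Polynomial.aeval_def, algebraMap_int_eq, ← Polynomial.eval_map,
        ← Polynomial.derivative_map]
      exact hderiv0
    exact interior_bound P d τ hd hdeg hτ x₀ m hm0 hm1 hx₀e hder
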